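/- Let μ be real and σ > 0, ρ > 0. For ε > 0, set f₁ = μ + σ/√ε, f₂ = μ - σ/√ε, λ₁ = λ₂ = 1/ε, D₁(ε) = (ρ+λ₁)f₂ + (ρ+λ₂)f₁, D₂(ε) = (ρ+λ₁)(ρ+λ₂) - λ₁λ₂, and β₂(ε) = (D₁(ε) - sqrt(D₁(ε)² - 4f₁f₂D₂(ε)))/(2f₁f₂). Then β₂(ε) → (-μ + sqrt(μ² + 2ρσ²))/σ² as ε → 0⁺. -/

import Mathlib

open Filter Topology
set_option maxHeartbeats 2000000 in

theorem beta2_converges_to_GBM_exponent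
    (μ σ ρ : ℝ) (hσ : 0 < σ) (hρ : 0 < ρ) :
    Filter.Tendsto
      (fun ε : ℝ =>
        let f1 := μ + σ / Real.sqrt ε
        let f2 := μ - σ / Real.sqrt ε
        let l1 := 1 / ε
        let l2 := 1 / ε
        let D1 := (ρ + l1) * f2 + (ρ + l2) * f1
        let D2 := (ρ + l1) * (ρ + l2) - l1 * l2
        (D1 - Real.sqrt (D1 ^ 2 - 4 * f1 * f2 * D2)) / (2 * f1 * f2))
      (nhdsWithin 0 (Set.Ioi 0))
      (nhds ((-μ + Real.sqrt (μ ^ 2 + 2 * ρ * σ ^ 2)) / σ ^ 2)) := by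
  set g : ℝ → ℝ := fun ε =>
    (ρ ^ 2 * ε + 2 * ρ) / (μ * (ρ * ε + 1) + Real.sqrt (μ ^ 2 + 2 * ρ * σ ^ 2 + ρ ^ 2 * σ ^ 2 * ε)) with hg
  have hs0nn : (0:ℝ) ≤ μ ^ 2 + 2 * ρ * σ ^ 2 := by positivity
  have hs0sq : Real.sqrt (μ ^ 2 + 2 * ρ * σ ^ 2) ^ 2 = μ ^ 2 + 2 * ρ * σ ^ 2 :=
    Real.sq_sqrt hs0nn
  have hs0nng : 0 ≤ Real.sqrt (μ ^ 2 + 2 * ρ * σ ^ 2) := Real.sqrt_nonneg _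
  have hden0 : 0 < μ + Real.sqrt (μ ^ 2 + 2 * ρ * σ ^ 2) := by
    nlinarith [hs0sq, hs0nng, mul_pos hρ (mul_pos hσ hσ)]
  -- limit of g
  have hgt : Tendsto g (nhdsWithin 0 (Set.Ioi 0))
      (nhds ((-μ + Real.sqrt (μ ^ 2 + 2 * ρ * σ ^ 2)) / σ ^ 2)) := by
    have hc : ContinuousAt g 0 := by
      apply ContinuousAt.div
      · fun_prop
      · apply ContinuousAt.add (by fun_prop)
        exact (Real.continuous_sqrt.continuousAt).comp (by fun_prop)
      · simpa using hden0.ne'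
    have hval : g 0 = (-μ + Real.sqrt (μ ^ 2 + 2 * ρ * σ ^ 2)) / σ ^ 2 := by
      simp only [hg]
      norm_num
      rw [div_eq_div_iff hden0.ne' (by positivity : (σ:ℝ)^2 ≠ 0)]
      nlinarith [hs0sq]
    rw [← hval]
    exact hc.tendsto.mono_left nhdsWithin_le_nhds
  apply Tendsto.congr' _ hgt
  filter_upwards [self_mem_nhdsWithin,
    Ioo_mem_nhdsGT (by positivity : (0:ℝ) < σ^2/(μ^2+1))] with ε hε hεδ
  have hε : (0:ℝ) < ε := hε
  have hεδ : ε < σ^2/(μ^2+1) := hεδ.2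
  have hcrit : μ^2 * ε < σ^2 := by
    have h1 : ε * (μ^2+1) < σ^2 := (lt_div_iff₀ (by positivity)).mp hεδ
    nlinarith
  have hsqε : Real.sqrt ε ^ 2 = ε := Real.sq_sqrt hε.le
  have hsqεpos : 0 < Real.sqrt ε := Real.sqrt_pos.mpr hε
  set s := Real.sqrt (μ ^ 2 + 2 * ρ * σ ^ 2 + ρ ^ 2 * σ ^ 2 * ε) with hs
  have hinn : (0:ℝ) < μ ^ 2 + 2 * ρ * σ ^ 2 + ρ ^ 2 * σ ^ 2 * ε := by positivity
  have hssq : s ^ 2 = μ ^ 2 + 2 * ρ * σ ^ 2 + ρ ^ 2 * σ ^ 2 * ε := Real.sq_sqrt hinn.le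
  have hspos : 0 < s := Real.sqrt_pos.mpr hinn
  have h3 : 0 < ρ * (σ^2 - μ^2 * ε) * (2 + ρ * ε) := by
    have : 0 < σ^2 - μ^2*ε := by linarith
    have : 0 < 2 + ρ * ε := by nlinarith
    positivity
  have hDg : 0 < μ * (ρ * ε + 1) + s := by
    nlinarith [hssq, hspos, h3, sq_nonneg (μ * (ρ*ε+1) + s)]
  show g ε = _
  simp only []
  -- f1 * f2
  have hff : (μ + σ / Real.sqrt ε) * (μ - σ / Real.sqrt ε) = μ^2 - σ^2/ε := by
    field_simp
    nlinarith [hsqε]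
  have hffneg : μ^2 - σ^2/ε < 0 := by
    rw [sub_neg]
    rw [lt_div_iff₀ hε]
    linarith
  -- the discriminant
  have hdisc : ((ρ + 1/ε) * (μ - σ / Real.sqrt ε) + (ρ + 1/ε) * (μ + σ / Real.sqrt ε)) ^ 2
      - 4 * (μ + σ / Real.sqrt ε) * (μ - σ / Real.sqrt ε)
        * ((ρ + 1/ε) * (ρ + 1/ε) - 1/ε * (1/ε))
      = (2/ε)^2 * (μ ^ 2 + 2 * ρ * σ ^ 2 + ρ ^ 2 * σ ^ 2 * ε) := by
    have hεt : ε = Real.sqrt ε ^ 2 := hsqε.symm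
    rw [hεt]
    generalize Real.sqrt ε = t at hsqεpos ⊢
    field_simp
    rw [Real.sqrt_sq hsqεpos.le]
    ring
  rw [hdisc, Real.sqrt_mul (by positivity) _, Real.sqrt_sq (by positivity : (0:ℝ) ≤ 2/ε), ← hs]
  rw [show (ρ + 1/ε) * (μ - σ / Real.sqrt ε) + (ρ + 1/ε) * (μ + σ / Real.sqrt ε)
      = 2 * μ * (ρ + 1/ε) by ring]
  rw [show 2 * (μ + σ / Real.sqrt ε) * (μ - σ / Real.sqrt ε) = 2 * (μ^2 - σ^2/ε) by
    rw [mul_assoc, hff]]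
  rw [hg]
  simp only []
  rw [div_eq_div_iff hDg.ne' (by intro h; nlinarith : 2 * (μ^2 - σ^2/ε) ≠ 0)]
  field_simp
  linear_combination hssq
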